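/- Let d ≥ 1, n = d+1, q a primitive n-th root of unity in F, ε ∈ F not among 1,q,…,q^d. Define R = R(q,ε) ∈ Mat_n(F) by R_{0,d} = 1−ε, R_{i,i-1} = q^i − ε for 1 ≤ i ≤ d, all other entries zero. Then with A = A(q,ε) and A* = diag(1,q,…,q^d): (i) A*A − εI = R = q(AA* − εI); (ii) qAR = RA and q^{-1}A*R = RA*; (iii) R^{n} = (−1)^d (ε;q)_{n} I, and R is invertible. -/

import Mathlib

/-- The q-Pochhammer symbol `(a;q)_r = (1-a)(1-aq)⋯(1-aq^{r-1})`. -/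
def qpoch {F : Type*} [Field F] (a q : F) (r : ℕ) : F :=
  ∏ ℓ ∈ Finset.range r, (1 - a * q ^ ℓ)

lemma sub_one_val' {n : ℕ} (hn : 1 ≤ n) (i : Fin (n+1)) :
    ((i - 1 : Fin (n+1)) : ℕ) = if (i : ℕ) = 0 then n else (i : ℕ) - 1 := by
  have h1 : ((1 : Fin (n+1)) : ℕ) = 1 := by
    rw [Fin.val_one']; exact Nat.mod_eq_of_lt (by omega)
  obtain ⟨iv, hlt⟩ := i
  rw [Fin.sub_def]
  simp only [h1, Fin.val_mk]
  match iv, hlt with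
  | 0, _ =>
    simp only [Nat.add_zero, if_pos rfl]
    exact Nat.mod_eq_of_lt (by omega)
  | (k+1), hlt =>
    rw [show n + 1 - 1 + (k+1) = (n+1) + k by omega, Nat.add_mod_left,
      Nat.mod_eq_of_lt (by omega)]
    simp

def Pmat {F : Type*} [Field F] {n : ℕ} (k : Fin (n+1)) (h : Fin (n+1) → F) :
    Matrix (Fin (n+1)) (Fin (n+1)) F :=
  Matrix.of fun i j => if j = i - k then h i else 0

theorem Pmat_mul_Pmat {F : Type*} [Field F] {n : ℕ} (k k' : Fin (n+1)) (h h' : Fin (n+1) → F) :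
    Pmat k h * Pmat k' h' = Pmat (k + k') (fun i => h i * h' (i - k)) := by
  ext i j
  rw [Matrix.mul_apply, Finset.sum_eq_single (i - k)]
  · simp [Pmat, sub_sub]
  · intro b _ hb; simp [Pmat, hb]
  · simp

theorem diagonal_mul_Pmat {F : Type*} [Field F] {n : ℕ} (a : Fin (n+1) → F) (k : Fin (n+1))
    (h : Fin (n+1) → F) :
    Matrix.diagonal a * Pmat k h = Pmat k (fun i => a i * h i) := by
  ext i j
  simp [Pmat, Matrix.diagonal_mul, mul_ite]

theorem Pmat_mul_diagonal {F : Type*} [Field F] {n : ℕ} (a : Fin (n+1) → F) (k : Fin (n+1))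
    (h : Fin (n+1) → F) :
    Pmat k h * Matrix.diagonal a = Pmat k (fun i => h i * a (i - k)) := by
  ext i j
  simp only [Pmat, Matrix.mul_diagonal, Matrix.of_apply, ite_mul, zero_mul]
  split
  · next heq => rw [heq]
  · rfl

theorem smul_Pmat {F : Type*} [Field F] {n : ℕ} (c : F) (k : Fin (n+1)) (h : Fin (n+1) → F) :
    c • Pmat k h = Pmat k (fun i => c * h i) := by
  ext i j
  simp [Pmat, mul_ite]

theorem Pmat_zero {F : Type*} [Field F] {n : ℕ} (h : Fin (n+1) → F) :
    Pmat 0 h = Matrix.diagonal h := by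
  ext i j
  simp [Pmat, Matrix.diagonal_apply, eq_comm]

theorem Pmat_congr {F : Type*} [Field F] {n : ℕ} (k : Fin (n+1)) {h h' : Fin (n+1) → F}
    (H : ∀ i, h i = h' i) : Pmat k h = Pmat k h' := by
  ext i j
  simp only [Pmat, Matrix.of_apply, H i]

open Fin.NatCast Fin.CommRing in
theorem Pmat_one_pow {F : Type*} [Field F] {n : ℕ} (g : Fin (n+1) → F) (m : ℕ) :
    Pmat 1 g ^ m = Pmat (m : Fin (n+1))
      (fun i => ∏ t ∈ Finset.range m, g (i - (t : Fin (n+1)))) := by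
  induction m with
  | zero => simp [Pmat_zero, Matrix.diagonal_one]
  | succ m ih =>
    have hk : (1 : Fin (n+1)) + (m : Fin (n+1)) = ((m+1 : ℕ) : Fin (n+1)) := by
      push_cast; ring
    rw [pow_succ', ih, Pmat_mul_Pmat, hk]
    apply Pmat_congr
    intro i
    show g i * ∏ t ∈ Finset.range m, g (i - 1 - (t : Fin (n+1))) = _
    rw [Finset.prod_range_succ']
    simp only [Nat.cast_add, Nat.cast_one, Nat.cast_zero, sub_zero]
    rw [mul_comm]
    congr 1
    apply Finset.prod_congr rfl
    intro t _
    congr 1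
    ring

open Polynomial in
lemma prod_x_sub_pow {F : Type*} [Field F] {n : ℕ} (hn : 0 < n) {q : F}
    (hq : IsPrimitiveRoot q n) (x : F) :
    ∏ k ∈ Finset.range n, (x - q ^ k) = x ^ n - 1 := by
  classical
  have hinj : ∀ a ∈ Finset.range n, ∀ b ∈ Finset.range n,
      q ^ a = q ^ b → a = b := by
    intro a ha b hb hab
    exact hq.pow_inj (Finset.mem_range.mp ha) (Finset.mem_range.mp hb) hab
  have himg : (Finset.range n).image (fun k => q ^ k) = nthRootsFinset n (1 : F) := by
    apply Finset.eq_of_subset_of_card_le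
    · intro y hy
      simp only [Finset.mem_image, Finset.mem_range] at hy
      obtain ⟨k, hk, rfl⟩ := hy
      rw [mem_nthRootsFinset hn (1 : F), ← pow_mul, mul_comm, pow_mul, hq.pow_eq_one, one_pow]
    · rw [hq.card_nthRootsFinset, Finset.card_image_of_injOn hinj, Finset.card_range]
  have hpoly := Polynomial.X_pow_sub_one_eq_prod hn hq
  have := congrArg (Polynomial.eval x) hpoly
  simp only [eval_sub, eval_pow, eval_X, eval_one, eval_prod, eval_sub, eval_C] at this
  rw [this, ← himg, Finset.prod_image hinj]

theorem stmt18 {F : Type*} [Field F] (d : ℕ) (hd : 1 ≤ d) (q ε : F)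
    (hq : IsPrimitiveRoot q (d + 1))
    (hε : ∀ i : ℕ, i ≤ d → ε ≠ q ^ i)
    (A Astar R : Matrix (Fin (d + 1)) (Fin (d + 1)) F)
    (hA : A = Matrix.of fun i j : Fin (d + 1) =>
      if i.val = j.val then q⁻¹ ^ i.val * ε
      else if i.val = j.val + 1 then 1 - q⁻¹ ^ i.val * ε
      else if i.val = 0 ∧ j.val = d then 1 - ε else 0)
    (hAstar : Astar = Matrix.diagonal fun i : Fin (d + 1) => q ^ i.val)
    (hR : R = Matrix.of fun i j : Fin (d + 1) =>
      if i.val = j.val + 1 then q ^ i.val - ε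
      else if i.val = 0 ∧ j.val = d then 1 - ε else 0) :
    (Astar * A - ε • 1 = R ∧ R = q • (A * Astar - ε • 1)) ∧
      (q • (A * R) = R * A ∧ q⁻¹ • (Astar * R) = R * Astar) ∧
      (R ^ (d + 1) = ((-1 : F) ^ d * qpoch ε q (d + 1)) • 1 ∧ IsUnit R) := by
  classical
  have hq1 : q ^ (d+1) = 1 := hq.pow_eq_one
  have hq0 : q ≠ 0 := by
    intro h
    rw [h, zero_pow (Nat.succ_ne_zero d)] at hq1
    exact zero_ne_one hq1
  have hqq : q * q⁻¹ = 1 := mul_inv_cancel₀ hq0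
  have ht : ∀ i : Fin (d+1), q ^ (i:ℕ) * q⁻¹ ^ (i:ℕ) = 1 := by
    intro i; rw [← mul_pow, hqq, one_pow]
  -- iff characterization of the cyclic shift
  have hiff : ∀ i j : Fin (d+1), (j = i - 1) ↔
      ((i:ℕ) = (j:ℕ) + 1 ∨ ((i:ℕ) = 0 ∧ (j:ℕ) = d)) := by
    intro i j
    have hi := i.isLt
    have hj := j.isLt
    rw [Fin.ext_iff, sub_one_val' hd]
    split <;> omega
  -- q-power shift keys
  have keyg : ∀ u : F, u ^ (d+1) = 1 →
      ∀ i : Fin (d+1), u ^ ((i - 1 : Fin (d+1)) : ℕ) * u = u ^ (i:ℕ) := by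
    intro u hu i
    rw [sub_one_val' hd i]
    split
    · next h0 => rw [← pow_succ, hu, h0, pow_zero]
    · next h0 =>
      rw [← pow_succ]
      congr 1
      have := i.isLt
      omega
  have key := keyg q hq1
  have keyi := keyg q⁻¹ (by rw [inv_pow, hq1, inv_one])
  have key' : ∀ i : Fin (d+1), q ^ ((i - 1 : Fin (d+1)) : ℕ) = q ^ (i:ℕ) * q⁻¹ := by
    intro i
    calc q ^ ((i - 1 : Fin (d+1)) : ℕ)
        = q ^ ((i - 1 : Fin (d+1)) : ℕ) * q * q⁻¹ := by
          rw [mul_assoc, hqq, mul_one]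
      _ = q ^ (i:ℕ) * q⁻¹ := by rw [key i]
  have keyi' : ∀ i : Fin (d+1), q⁻¹ ^ ((i - 1 : Fin (d+1)) : ℕ) = q⁻¹ ^ (i:ℕ) * q := by
    intro i
    calc q⁻¹ ^ ((i - 1 : Fin (d+1)) : ℕ)
        = q⁻¹ ^ ((i - 1 : Fin (d+1)) : ℕ) * q⁻¹ * q := by
          rw [mul_assoc, inv_mul_cancel₀ hq0, mul_one]
      _ = q⁻¹ ^ (i:ℕ) * q := by rw [keyi i]
  -- structural forms
  have hA2 : A = Matrix.diagonal (fun i : Fin (d+1) => q⁻¹ ^ (i:ℕ) * ε)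
      + Pmat 1 (fun i : Fin (d+1) => 1 - q⁻¹ ^ (i:ℕ) * ε) := by
    rw [hA]
    ext i j
    have hi := i.isLt
    have hj := j.isLt
    simp only [Matrix.of_apply, Matrix.add_apply, Matrix.diagonal_apply, Pmat]
    by_cases h0 : (i:ℕ) = (j:ℕ)
    · have hij : i = j := Fin.ext h0
      have h2 : ¬(j = i - 1) := by rw [hiff]; omega
      rw [if_pos h0, if_pos hij, if_neg h2, add_zero]
    · have hij : ¬ i = j := fun h => h0 (by rw [h])
      rw [if_neg h0, if_neg hij, zero_add]
      by_cases h1 : (i:ℕ) = (j:ℕ)+1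
      · have h2 : j = i - 1 := (hiff i j).mpr (Or.inl h1)
        rw [if_pos h1, if_pos h2]
      · rw [if_neg h1]
        by_cases h3 : (i:ℕ) = 0 ∧ (j:ℕ) = d
        · have h2 : j = i - 1 := (hiff i j).mpr (Or.inr h3)
          rw [if_pos h3, if_pos h2, h3.1, pow_zero, one_mul]
        · have h2 : ¬ j = i - 1 := by rw [hiff]; tauto
          rw [if_neg h3, if_neg h2]
  have hR2 : R = Pmat 1 (fun i : Fin (d+1) => q ^ (i:ℕ) - ε) := by
    rw [hR]
    ext i j
    simp only [Matrix.of_apply, Pmat]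
    by_cases h1 : (i:ℕ) = (j:ℕ)+1
    · have h2 : j = i - 1 := (hiff i j).mpr (Or.inl h1)
      rw [if_pos h1, if_pos h2]
    · rw [if_neg h1]
      by_cases h3 : (i:ℕ) = 0 ∧ (j:ℕ) = d
      · have h2 : j = i - 1 := (hiff i j).mpr (Or.inr h3)
        rw [if_pos h3, if_pos h2, h3.1, pow_zero]
      · have h2 : ¬ j = i - 1 := by rw [hiff]; tauto
        rw [if_neg h3, if_neg h2]
  have hsm : ∀ c : F, c • (1 : Matrix (Fin (d+1)) (Fin (d+1)) F)
      = Matrix.diagonal (fun _ => c) := by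
    intro c
    ext i j
    simp [Matrix.one_apply, Matrix.diagonal_apply, mul_ite]
  -- (i) first identity
  have hds : Matrix.diagonal (fun i : Fin (d+1) => q ^ (i:ℕ))
      * Matrix.diagonal (fun i : Fin (d+1) => q⁻¹ ^ (i:ℕ) * ε)
      = Matrix.diagonal (fun _ : Fin (d+1) => ε) := by
    have hfun : (fun i : Fin (d+1) => q ^ (i:ℕ) * (q⁻¹ ^ (i:ℕ) * ε))
        = fun _ => ε := by
      funext i
      rw [← mul_assoc, ht i, one_mul]
    rw [Matrix.diagonal_mul_diagonal, hfun]
  have e1 : Astar * A - ε • 1 = R := by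
    rw [hAstar, hA2, hR2, Matrix.mul_add, hds, diagonal_mul_Pmat, hsm, add_sub_cancel_left]
    apply Pmat_congr
    intro i
    rw [mul_sub, mul_one, ← mul_assoc, ht i, one_mul]
  have hds2 : Matrix.diagonal (fun i : Fin (d+1) => q⁻¹ ^ (i:ℕ) * ε)
      * Matrix.diagonal (fun i : Fin (d+1) => q ^ (i:ℕ))
      = Matrix.diagonal (fun _ : Fin (d+1) => ε) := by
    have hfun : (fun i : Fin (d+1) => q⁻¹ ^ (i:ℕ) * ε * q ^ (i:ℕ))
        = fun _ => ε := by
      funext i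
      rw [mul_comm, ← mul_assoc, ht i, one_mul]
    rw [Matrix.diagonal_mul_diagonal, hfun]
  have e2 : R = q • (A * Astar - ε • 1) := by
    rw [hAstar, hA2, hR2, Matrix.add_mul, hds2, Pmat_mul_diagonal, hsm,
      add_sub_cancel_left, smul_Pmat]
    apply Pmat_congr
    intro i
    rw [key' i, inv_pow]
    have hx : q ^ (i:ℕ) ≠ 0 := pow_ne_zero _ hq0
    field_simp
  have e3 : q • (A * R) = R * A := by
    rw [hA2, hR2, Matrix.add_mul, Matrix.mul_add, diagonal_mul_Pmat, Pmat_mul_diagonal,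
      Pmat_mul_Pmat, Pmat_mul_Pmat, smul_add, smul_Pmat, smul_Pmat]
    congr 1
    · apply Pmat_congr
      intro i
      rw [keyi' i, inv_pow]
      have hx : q ^ (i:ℕ) ≠ 0 := pow_ne_zero _ hq0
      field_simp
    · apply Pmat_congr
      intro i
      rw [key' i, keyi' i, inv_pow]
      have hx : q ^ (i:ℕ) ≠ 0 := pow_ne_zero _ hq0
      field_simp
  have e4 : q⁻¹ • (Astar * R) = R * Astar := by
    rw [hAstar, hR2, diagonal_mul_Pmat, Pmat_mul_diagonal, smul_Pmat]
    apply Pmat_congr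
    intro i
    rw [key' i]
    have hx : q ^ (i:ℕ) ≠ 0 := pow_ne_zero _ hq0
    field_simp
  -- the scalar
  have hqp : qpoch ε q (d+1) = 1 - ε ^ (d+1) := by
    by_cases hε0 : ε = 0
    · simp [qpoch, hε0, zero_pow (Nat.succ_ne_zero d)]
    · unfold qpoch
      calc ∏ ℓ ∈ Finset.range (d+1), (1 - ε * q ^ ℓ)
          = ∏ ℓ ∈ Finset.range (d+1), (ε * (ε⁻¹ - q ^ ℓ)) := by
            apply Finset.prod_congr rfl
            intro ℓ _
            rw [mul_sub, mul_inv_cancel₀ hε0]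
        _ = ε ^ (d+1) * ((ε⁻¹) ^ (d+1) - 1) := by
            rw [Finset.prod_mul_distrib, Finset.prod_const, Finset.card_range,
              prod_x_sub_pow (Nat.succ_pos d) hq ε⁻¹]
        _ = 1 - ε ^ (d+1) := by
            rw [mul_sub, ← mul_pow, mul_inv_cancel₀ hε0, one_pow, mul_one]
  have hc2 : ∏ k ∈ Finset.range (d+1), (q ^ k - ε)
      = (-1 : F) ^ d * qpoch ε q (d+1) := by
    have hstep : ∏ k ∈ Finset.range (d+1), (q ^ k - ε)
        = (-1 : F) ^ (d+1) * (ε ^ (d+1) - 1) := by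
      calc ∏ k ∈ Finset.range (d+1), (q ^ k - ε)
          = ∏ k ∈ Finset.range (d+1), ((-1) * (ε - q ^ k)) := by
            apply Finset.prod_congr rfl
            intro k _
            ring
        _ = (-1 : F) ^ (d+1) * (ε ^ (d+1) - 1) := by
            rw [Finset.prod_mul_distrib, Finset.prod_const, Finset.card_range,
              prod_x_sub_pow (Nat.succ_pos d) hq ε]
    rw [hstep, hqp, pow_succ]
    ring
  open Fin.NatCast in
  have e5 : R ^ (d+1) = ((-1 : F) ^ d * qpoch ε q (d+1)) • 1 := by
    have hcast : ((d+1 : ℕ) : Fin (d+1)) = 0 := by simp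
    have hprod : ∀ i : Fin (d+1),
        ∏ t ∈ Finset.range (d+1),
          (q ^ ((i - (t : Fin (d+1)) : Fin (d+1)) : ℕ) - ε)
        = (-1 : F) ^ d * qpoch ε q (d+1) := by
      intro i
      have h1 : ∏ t ∈ Finset.range (d+1),
          (q ^ ((i - (t : Fin (d+1)) : Fin (d+1)) : ℕ) - ε)
          = ∏ j : Fin (d+1), (q ^ (j:ℕ) - ε) := by
        rw [← Fin.prod_univ_eq_prod_range
          (fun t => q ^ ((i - (t : Fin (d+1)) : Fin (d+1)) : ℕ) - ε)]
        apply Fintype.prod_equiv (Equiv.subLeft i)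
        intro t
        rw [Fin.cast_val_eq_self]
        rfl
      rw [h1, Fin.prod_univ_eq_prod_range (fun k => q ^ k - ε), hc2]
    rw [hR2, Pmat_one_pow, hcast, Pmat_zero, hsm]
    exact congrArg Matrix.diagonal (funext hprod)
  have hcne : ((-1 : F) ^ d * qpoch ε q (d+1)) ≠ 0 := by
    apply mul_ne_zero
    · exact pow_ne_zero _ (neg_ne_zero.mpr one_ne_zero)
    · unfold qpoch
      rw [Finset.prod_ne_zero_iff]
      intro ℓ hℓ h0
      have hℓd : ℓ < d + 1 := Finset.mem_range.mp hℓ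
      have hεq : ε * q ^ ℓ = 1 := (sub_eq_zero.mp h0).symm
      by_cases hl0 : ℓ = 0
      · subst hl0
        rw [pow_zero, mul_one] at hεq
        exact hε 0 (Nat.zero_le d) (by rw [pow_zero]; exact hεq)
      · apply hε (d+1-ℓ) (by omega)
        have hmul : q ^ (d+1-ℓ) * q ^ ℓ = 1 := by
          rw [← pow_add, show d+1-ℓ+ℓ = d+1 by omega, hq1]
        calc ε = ε * (q ^ (d+1-ℓ) * q ^ ℓ) := by rw [hmul, mul_one]
          _ = (ε * q ^ ℓ) * q ^ (d+1-ℓ) := by ring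
          _ = q ^ (d+1-ℓ) := by rw [hεq, one_mul]
  have hinvR : R * (((-1 : F) ^ d * qpoch ε q (d+1))⁻¹ • R ^ d) = 1 := by
    rw [Matrix.mul_smul, ← pow_succ', e5, smul_smul, inv_mul_cancel₀ hcne, one_smul]
  have e6 : IsUnit R :=
    ⟨⟨R, ((-1 : F) ^ d * qpoch ε q (d+1))⁻¹ • R ^ d, hinvR,
      (mul_eq_one_comm).mp hinvR⟩, rfl⟩
  exact ⟨⟨e1, e2⟩, ⟨e3, e4⟩, e5, e6⟩
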